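/- Let S be a finite set with |S| = n, let c ∈ (0,1], and let m be a positive integer with m ≤ n/2. Let φ be a function assigning to every m-element subset Z ⊆ S a subset φ(Z) ⊆ Z with |φ(Z)| ≥ c·m. Then the number of distinct values taken by φ on m-element subsets of S is at least C(n,m) / C(n, ⌊(1−c)m⌋), where C(·,·) denotes the binomial coefficient. -/

import Mathlib

lemma choose_mono_right_of_le_half {n j k : ℕ} (hjk : j ≤ k) (hk : 2 * k ≤ n) :
    n.choose j ≤ n.choose k := by
  have hk' : k ≤ n / 2 := Nat.le_div_iff_mul_le (by norm_num) |>.2 (by omega)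
  clear hk
  induction k, hjk using Nat.le_induction with
  | base => exact le_rfl
  | succ k hjk ih =>
      exact (ih (Nat.le_of_succ_le hk')).trans
        (Nat.choose_le_succ_of_lt_half_left hk')

/-- Counting lemma: if `φ` assigns to each `m`-subset `Z` of an `n`-set a subset
`φ(Z) ⊆ Z` of size at least `c·m` (with `m ≤ n/2`), then `φ` takes at least
`C(n,m)/C(n,⌊(1-c)m⌋)` distinct values. -/
theorem stmt7 {α : Type*} [DecidableEq α] (S : Finset α) (n : ℕ) (hn : S.card = n)
    (c : ℝ) (hc : c ∈ Set.Ioc (0:ℝ) 1) (m : ℕ) (hm : 0 < m) (hmn : 2 * m ≤ n)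
    (φ : Finset α → Finset α)
    (hsub : ∀ Z ∈ S.powersetCard m, φ Z ⊆ Z)
    (hcard : ∀ Z ∈ S.powersetCard m, (c * m : ℝ) ≤ ((φ Z).card : ℝ)) :
    (n.choose m : ℝ) / (n.choose ⌊(1 - c) * (m : ℝ)⌋₊ : ℝ)
      ≤ (((S.powersetCard m).image φ).card : ℝ) := by
  set t : ℕ := ⌊(1 - c) * (m : ℝ)⌋₊ with ht
  have htm : t ≤ m := by
    have : (1 - c) * (m : ℝ) ≤ (m : ℝ) := by nlinarith [hc.1, Nat.cast_nonneg (α := ℝ) m]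
    calc t ≤ ⌊(m : ℝ)⌋₊ := Nat.floor_le_floor this
      _ = m := Nat.floor_natCast m
  have hNpos : 0 < n.choose t := Nat.choose_pos (by omega)
  -- key counting: C(n,m) ≤ image.card * C(n,t)
  have key : n.choose m ≤ ((S.powersetCard m).image φ).card * n.choose t := by
    have hcount : (S.powersetCard m).card = n.choose m := by
      rw [Finset.card_powersetCard, hn]
    rw [← hcount]
    rw [Finset.card_eq_sum_card_fiberwise (f := φ)
      (t := (S.powersetCard m).image φ) (fun Z hZ => Finset.mem_image_of_mem φ hZ)]
    rw [← smul_eq_mul]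
    apply Finset.sum_le_card_nsmul
    intro W hW
    obtain ⟨Z₀, hZ₀, hφ₀⟩ := Finset.mem_image.1 hW
    have hWZ₀ : W ⊆ Z₀ := hφ₀ ▸ hsub Z₀ hZ₀
    obtain ⟨hZ₀S, hZ₀card⟩ := Finset.mem_powersetCard.1 hZ₀
    set w : ℕ := W.card with hw
    have hwm : w ≤ m := hZ₀card ▸ Finset.card_le_card hWZ₀
    have hWS : W ⊆ S := hWZ₀.trans hZ₀S
    -- each fiber injects into (m-w)-subsets of S \ W
    have hfib : (Finset.filter (fun a => φ a = W) (S.powersetCard m)).card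
        ≤ ((S \ W).powersetCard (m - w)).card := by
      apply Finset.card_le_card_of_injOn (fun Z => Z \ W)
      · intro Z hZ
        simp only [Finset.mem_coe, Finset.mem_filter] at hZ
        obtain ⟨hZm, hZW⟩ := hZ
        obtain ⟨hZS, hZcard⟩ := Finset.mem_powersetCard.1 hZm
        have hWZ : W ⊆ Z := hZW ▸ hsub Z hZm
        simp only [Finset.mem_coe, Finset.mem_powersetCard]
        exact ⟨Finset.sdiff_subset_sdiff hZS le_rfl,
          by rw [Finset.card_sdiff_of_subset hWZ, hZcard]⟩
      · intro Z₁ h₁ Z₂ h₂ heq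
        simp only [Finset.mem_coe, Finset.mem_filter] at h₁ h₂
        have hW₁ : W ⊆ Z₁ := h₁.2 ▸ hsub Z₁ h₁.1
        have hW₂ : W ⊆ Z₂ := h₂.2 ▸ hsub Z₂ h₂.1
        rw [← Finset.sdiff_union_of_subset hW₁, ← Finset.sdiff_union_of_subset hW₂]
        simp only at heq
        rw [heq]
    have hmwt : m - w ≤ t := by
      rcases Nat.lt_or_ge w m with h | h
      · apply Nat.le_floor
        rw [Nat.cast_sub (le_of_lt h)]
        have hcW : c * m ≤ (w : ℝ) := by
          have := hcard Z₀ hZ₀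
          rwa [hφ₀] at this
        nlinarith
      · simp [Nat.sub_eq_zero_of_le h]
    calc (Finset.filter (fun a => φ a = W) (S.powersetCard m)).card
        ≤ ((S \ W).powersetCard (m - w)).card := hfib
      _ = (S \ W).card.choose (m - w) := Finset.card_powersetCard _ _
      _ ≤ n.choose (m - w) := Nat.choose_le_choose _ (by
          rw [Finset.card_sdiff_of_subset hWS, hn]; omega)
      _ ≤ n.choose t := choose_mono_right_of_le_half hmwt (by omega)
  -- conclude with division
  rw [div_le_iff₀ (by positivity)]
  calc (n.choose m : ℝ) ≤ (((S.powersetCard m).image φ).card * n.choose t : ℕ) := by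
        exact_mod_cast key
    _ = _ := by push_cast; ring
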